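/- Let X be a reflexive Banach space and let (P_F)_{F} be a net of bounded linear projections onto subspaces Y_F of X, indexed by the finite subsets F of a set A directed by inclusion, with sup_F ‖P_F‖ = C < ∞, each Y_F = span{y_α : α ∈ F} for a fixed family (y_α)_{α ∈ A}, and P_F y_α = y_α whenever α ∈ F. Then there exists a bounded linear projection P on X with ‖P‖ ≤ C whose range is the closed linear span of {y_α : α ∈ A}, obtained as a weak operator topology cluster point of the net (P_F). -/

import Mathlib

open Filter Topology

/-- A point belongs to a closed submodule of a real normed space as soon as every continuous
linear functional vanishing on the submodule vanishes at the point. -/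
lemma mem_of_forall_dual_eq_zero {X : Type*} [NormedAddCommGroup X] [NormedSpace ℝ X]
    (Y : Submodule ℝ X) (hY : IsClosed (Y : Set X)) (x : X)
    (h : ∀ f : X →L[ℝ] ℝ, (∀ w ∈ Y, f w = 0) → f x = 0) : x ∈ Y := by
  by_contra hx
  obtain ⟨f, u, hfx, hfY⟩ := geometric_hahn_banach_point_closed Y.convex hY hx
  have hvanish : ∀ w ∈ Y, f w = 0 := by
    intro w hw
    by_contra hfw
    have hmem : ((u - 1) / f w) • w ∈ Y := Y.smul_mem _ hw
    have := hfY _ hmem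
    rw [map_smul, smul_eq_mul, div_mul_cancel₀ _ hfw] at this
    linarith
  have h0 : (0 : ℝ) < f x ∨ True := Or.inr trivial
  have hu0 : u < 0 := by
    have := hfY 0 Y.zero_mem
    simpa using this
  have := h f hvanish
  linarith

theorem exists_lim_along_ultrafilter {α : Type*} (U : Ultrafilter α) (g : α → ℝ) (R : ℝ)
    (hg : ∀ a, |g a| ≤ R) : ∃ r : ℝ, Tendsto g (U : Filter α) (𝓝 r) := by
  have hmaps : ∀ a, g a ∈ Metric.closedBall (0 : ℝ) R := by
    intro a; simpa [Real.norm_eq_abs] using hg a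
  have hcpt : IsCompact (Metric.closedBall (0 : ℝ) R) := isCompact_closedBall 0 R
  have hle : (U.map g : Filter ℝ) ≤ 𝓟 (Metric.closedBall (0 : ℝ) R) := by
    rw [le_principal_iff]
    exact Filter.mem_map.2 (Filter.univ_mem' hmaps)
  obtain ⟨r, _, hr⟩ := hcpt.ultrafilter_le_nhds (U.map g) hle
  exact ⟨r, hr⟩

/-- In a reflexive Banach space, a uniformly bounded net of projections `P_F` onto the spans of
finite subfamilies of `(y_α)` (fixing the corresponding `y_α`) has a cluster point which is a
projection of norm at most `C` onto the closed span of all the `y_α`. -/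
theorem stmt12 (X : Type*) [NormedAddCommGroup X] [NormedSpace ℝ X] [CompleteSpace X]
    (hrefl : Function.Surjective (NormedSpace.inclusionInDoubleDual ℝ X))
    (A : Type*) (y : A → X) (P : Finset A → X →L[ℝ] X) (C : ℝ)
    (hC : ∀ F, ‖P F‖ ≤ C)
    (hproj : ∀ F (z : X), P F (P F z) = P F z)
    (hrange : ∀ (F : Finset A) (z : X), P F z ∈ Submodule.span ℝ (y '' ↑F))
    (hfix : ∀ F, ∀ α ∈ F, P F (y α) = y α) :
    ∃ Q : X →L[ℝ] X, ‖Q‖ ≤ C ∧ (∀ z, Q (Q z) = Q z) ∧ (∀ α, Q (y α) = y α) ∧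
      LinearMap.range (Q : X →ₗ[ℝ] X) = (Submodule.span ℝ (Set.range y)).topologicalClosure := by
  classical
  have hC0 : 0 ≤ C := le_trans (norm_nonneg _) (hC ∅)
  -- the inclusion into the double dual is an isometry, hence injective
  have hiso : ∀ x : X, ‖NormedSpace.inclusionInDoubleDual ℝ X x‖ = ‖x‖ := fun x =>
    (NormedSpace.inclusionInDoubleDualLi (𝕜 := ℝ) (E := X)).norm_map x
  have hinj : Function.Injective (NormedSpace.inclusionInDoubleDual ℝ X) := by
    intro a b hab
    have : ‖NormedSpace.inclusionInDoubleDual ℝ X (a - b)‖ = ‖a - b‖ := hiso _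
    rw [map_sub, hab, sub_self] at this
    exact (NormedSpace.inclusionInDoubleDualLi (𝕜 := ℝ) (E := X)).injective hab
  -- an ultrafilter refining the `atTop` filter on finite subsets of `A`
  let U : Ultrafilter (Finset A) := Ultrafilter.of atTop
  have hU : (U : Filter (Finset A)) ≤ atTop := Ultrafilter.of_le atTop
  -- for each `z` and each functional `f`, the net `f (P F z)` has a limit along `U`
  have key : ∀ z : X, ∀ f : StrongDual ℝ X,
      ∃ r : ℝ, Tendsto (fun F => f (P F z)) (U : Filter (Finset A)) (𝓝 r) := by
    intro z f
    refine exists_lim_along_ultrafilter U _ (‖f‖ * (C * ‖z‖)) fun F => ?_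
    calc |f (P F z)| ≤ ‖f‖ * ‖P F z‖ := f.le_opNorm _
      _ ≤ ‖f‖ * (C * ‖z‖) := by
          gcongr
          calc ‖P F z‖ ≤ ‖P F‖ * ‖z‖ := (P F).le_opNorm z
            _ ≤ C * ‖z‖ := by gcongr; exact hC F
  choose L hL using key
  have hLbound : ∀ z f, |L z f| ≤ ‖f‖ * (C * ‖z‖) := by
    intro z f
    refine le_of_tendsto ((hL z f).abs) (Filter.Eventually.of_forall fun F => ?_)
    calc |f (P F z)| ≤ ‖f‖ * ‖P F z‖ := f.le_opNorm _
      _ ≤ ‖f‖ * (C * ‖z‖) := by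
          gcongr
          calc ‖P F z‖ ≤ ‖P F‖ * ‖z‖ := (P F).le_opNorm z
            _ ≤ C * ‖z‖ := by gcongr; exact hC F
  -- the limit functional `Φ z ∈ X**`
  have hLadd : ∀ z f g, L z (f + g) = L z f + L z g := fun z f g =>
    tendsto_nhds_unique (hL z (f + g)) (by simpa using (hL z f).add (hL z g))
  have hLsmul : ∀ z (c : ℝ) f, L z (c • f) = c * L z f := fun z c f =>
    tendsto_nhds_unique (hL z (c • f)) (by simpa using (hL z f).const_mul c)
  let Φ : X → StrongDual ℝ (StrongDual ℝ X) := fun z =>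
    LinearMap.mkContinuous
      { toFun := L z
        map_add' := hLadd z
        map_smul' := fun c f => hLsmul z c f }
      (C * ‖z‖)
      (fun f => by
        rw [mul_comm (C * ‖z‖) ‖f‖]
        simpa [Real.norm_eq_abs] using hLbound z f)
  have hΦapply : ∀ z f, Φ z f = L z f := fun z f => rfl
  -- pull `Φ z` back to an element `Q₀ z` of `X` using reflexivity
  choose Q₀ hQ₀ using fun z => hrefl (Φ z)
  have hQ₀apply : ∀ z f, f (Q₀ z) = L z f := by
    intro z f
    have : NormedSpace.inclusionInDoubleDual ℝ X (Q₀ z) f = Φ z f := by rw [hQ₀ z]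
    rw [hΦapply] at this
    simpa [NormedSpace.dual_def] using this
  -- norm bound for `Q₀`
  have hQ₀norm : ∀ z, ‖Q₀ z‖ ≤ C * ‖z‖ := by
    intro z
    rw [← hiso (Q₀ z), hQ₀ z]
    refine ContinuousLinearMap.opNorm_le_bound _ (by positivity) fun f => ?_
    rw [hΦapply, mul_comm (C * ‖z‖) ‖f‖]
    simpa [Real.norm_eq_abs] using hLbound z f
  -- `Q₀` is additive and homogeneous
  have hLaddz : ∀ z w f, L (z + w) f = L z f + L w f := fun z w f =>
    tendsto_nhds_unique (hL (z + w) f) (by simpa using (hL z f).add (hL w f))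
  have hLsmulz : ∀ (c : ℝ) z f, L (c • z) f = c * L z f := fun c z f =>
    tendsto_nhds_unique (hL (c • z) f) (by simpa using (hL z f).const_mul c)
  have hQ₀add : ∀ z w, Q₀ (z + w) = Q₀ z + Q₀ w := by
    intro z w
    apply hinj
    ext f
    simp only [map_add, ContinuousLinearMap.add_apply]
    show f (Q₀ (z + w)) = f (Q₀ z) + f (Q₀ w)
    rw [hQ₀apply, hQ₀apply, hQ₀apply, hLaddz]
  have hQ₀smul : ∀ (c : ℝ) z, Q₀ (c • z) = c • Q₀ z := by
    intro c z
    apply hinj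
    ext f
    simp only [map_smul, ContinuousLinearMap.smul_apply]
    show f (Q₀ (c • z)) = c • f (Q₀ z)
    rw [hQ₀apply, hQ₀apply, hLsmulz, smul_eq_mul]
  let Q : X →L[ℝ] X :=
    LinearMap.mkContinuous
      { toFun := Q₀
        map_add' := hQ₀add
        map_smul' := hQ₀smul }
      C hQ₀norm
  have hQapply : ∀ z, Q z = Q₀ z := fun z => rfl
  -- `Q` fixes each `y α`
  have hQfix : ∀ α, Q (y α) = y α := by
    intro α
    apply hinj
    ext f
    show f (Q (y α)) = f (y α)
    rw [hQapply, hQ₀apply]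
    refine tendsto_nhds_unique (hL (y α) f) ?_
    have hev : ∀ᶠ F in (U : Filter (Finset A)), f (P F (y α)) = f (y α) := by
      refine hU ?_
      filter_upwards [eventually_ge_atTop ({α} : Finset A)] with F hF
      rw [hfix F α (by simpa using hF)]
    exact Tendsto.congr' (hev.mono fun F h => h.symm) tendsto_const_nhds
  -- `Q z` belongs to the closed span of the `y α`
  set Y : Submodule ℝ X := (Submodule.span ℝ (Set.range y)).topologicalClosure with hYdef
  have hYclosed : IsClosed (Y : Set X) := (Submodule.span ℝ (Set.range y)).isClosed_topologicalClosure
  have hQmem : ∀ z, Q z ∈ Y := by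
    intro z
    apply mem_of_forall_dual_eq_zero Y hYclosed
    intro f hf
    rw [hQapply, hQ₀apply]
    refine tendsto_nhds_unique (hL z f) ?_
    have hev : ∀ F, f (P F z) = 0 := by
      intro F
      apply hf
      refine Submodule.topologicalClosure_mono ?_ (Submodule.le_topologicalClosure _ (hrange F z))
      exact Submodule.span_mono (Set.image_subset_range y F)
    simpa [hev] using (tendsto_const_nhds : Tendsto (fun _ : Finset A => (0:ℝ)) _ (𝓝 0))
  -- `Q` fixes every element of `Y`
  have hQfixY : ∀ w ∈ Y, Q w = w := by
    intro w hw
    have hclosed : IsClosed {x : X | Q x = x} := isClosed_eq Q.continuous continuous_id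
    have hspan : (Submodule.span ℝ (Set.range y) : Set X) ⊆ {x : X | Q x = x} := by
      intro x hx
      induction hx using Submodule.span_induction with
      | mem x hx => obtain ⟨α, rfl⟩ := hx; exact hQfix α
      | zero => simp
      | add a b _ _ ha hb => simp only [Set.mem_setOf_eq] at *; rw [map_add, ha, hb]
      | smul c a _ ha => simp only [Set.mem_setOf_eq] at *; rw [map_smul, ha]
    have : (Y : Set X) ⊆ {x : X | Q x = x} := by
      rw [hYdef]
      have := closure_minimal hspan hclosed
      simpa [Submodule.topologicalClosure_coe] using this
    exact this hw
  refine ⟨Q, ?_, ?_, hQfix, ?_⟩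
  · exact Q.opNorm_le_bound hC0 hQ₀norm
  · intro z
    exact hQfixY (Q z) (hQmem z)
  · apply le_antisymm
    · rintro x ⟨z, rfl⟩
      exact hQmem z
    · intro w hw
      exact ⟨w, hQfixY w hw⟩
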